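/- With notation as in the previous statement, the matrix M := (1/(∑_j γ_j⁻¹)) Σ + k D(μ²) D(γ) − (k/(∑_j γ_j⁻¹)) μμᵀ (that is, M̄ with γ_R set to 0, equivalently M = M̄ − γ_R Σ) is positive definite and hence invertible. -/

import Mathlib

open Matrix BigOperators

theorem stmt2 {n : ℕ} (S : Matrix (Fin n) (Fin n) ℝ) (hS : S.PosDef)
    (μ γ : Fin n → ℝ) (hμ : ∀ i, 0 < μ i) (hγ : ∀ i, 0 < γ i)
    (k : ℝ) (hk : k = (μ ⬝ᵥ S⁻¹.mulVec μ)⁻¹)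
    (M : Matrix (Fin n) (Fin n) ℝ)
    (hM : M = (∑ j, (γ j)⁻¹)⁻¹ • S
      + k • (Matrix.diagonal (fun i => (μ i) ^ 2) * Matrix.diagonal γ)
      - (k / (∑ j, (γ j)⁻¹)) • Matrix.vecMulVec μ μ) :
    M.PosDef ∧ IsUnit M.det := by
  have hMpd : M.PosDef := by
    rw [Matrix.posDef_iff_dotProduct_mulVec]
    constructor
    · -- Hermitian
      rw [hM, Matrix.diagonal_mul_diagonal]
      have hsmul : ∀ (c : ℝ) (A : Matrix (Fin n) (Fin n) ℝ),
          A.IsHermitian → (c • A).IsHermitian := by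
        intro c A hA
        rw [Matrix.IsHermitian, Matrix.conjTranspose_smul, hA]
        simp
      refine ((hsmul _ _ hS.1).add (hsmul _ _ (Matrix.isHermitian_diagonal _))).sub
        (hsmul _ _ ?_)
      ext i j
      simp [Matrix.conjTranspose_apply, Matrix.vecMulVec_apply, mul_comm]
    · intro x hx
      obtain ⟨i0, hi0⟩ := Function.ne_iff.mp hx
      -- k > 0
      have hμne : μ ≠ 0 := by
        intro h
        exact absurd (congrFun h i0) (ne_of_gt (hμ i0))
      have hkpos : 0 < k := by
        rw [hk]
        exact inv_pos.mpr (by simpa using hS.inv.dotProduct_mulVec_pos hμne)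
      have hsumpos : 0 < ∑ j, (γ j)⁻¹ :=
        Finset.sum_pos (fun j _ => inv_pos.mpr (hγ j)) ⟨i0, Finset.mem_univ i0⟩
      -- expand the quadratic form
      have hexp : star x ⬝ᵥ M *ᵥ x
          = (∑ j, (γ j)⁻¹)⁻¹ * (x ⬝ᵥ S *ᵥ x)
            + k * (∑ i, γ i * μ i ^ 2 * x i ^ 2)
            - (k / (∑ j, (γ j)⁻¹)) * (μ ⬝ᵥ x) ^ 2 := by
        subst hM
        rw [Matrix.diagonal_mul_diagonal]
        simp only [sub_mulVec, add_mulVec, smul_mulVec, dotProduct_sub, dotProduct_add,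
          dotProduct_smul, star_trivial, smul_eq_mul]
        congr 1
        congr 1
        · congr 1
          simp only [dotProduct, mulVec_diagonal]
          exact Finset.sum_congr rfl fun i _ => by ring
        · have h1 : (vecMulVec μ μ) *ᵥ x = fun i => μ i * (μ ⬝ᵥ x) := by
            ext i
            simp [vecMulVec_apply, mulVec, dotProduct, Finset.mul_sum, mul_assoc]
          rw [h1]
          congr 1
          simp only [dotProduct]
          rw [sq, Finset.sum_mul]
          exact Finset.sum_congr rfl fun i _ => by ring
      rw [hexp]
      -- Cauchy-Schwarz
      have hcs : (μ ⬝ᵥ x) ^ 2 ≤ (∑ j, (γ j)⁻¹) * (∑ i, γ i * μ i ^ 2 * x i ^ 2) := by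
        have := Finset.sum_mul_sq_le_sq_mul_sq Finset.univ
          (fun i => Real.sqrt (γ i)⁻¹) (fun i => Real.sqrt (γ i) * (μ i * x i))
        have heq : ∀ i : Fin n, Real.sqrt (γ i)⁻¹ * (Real.sqrt (γ i) * (μ i * x i))
            = μ i * x i := by
          intro i
          rw [← mul_assoc, ← Real.sqrt_mul (le_of_lt (inv_pos.mpr (hγ i))),
            inv_mul_cancel₀ (ne_of_gt (hγ i)), Real.sqrt_one, one_mul]
        calc (μ ⬝ᵥ x) ^ 2 = (∑ i, Real.sqrt (γ i)⁻¹ * (Real.sqrt (γ i) * (μ i * x i))) ^ 2 := by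
              rw [dotProduct]; exact congrArg (· ^ 2) (Finset.sum_congr rfl fun i _ => (heq i).symm)
          _ ≤ (∑ i, Real.sqrt (γ i)⁻¹ ^ 2) * ∑ i, (Real.sqrt (γ i) * (μ i * x i)) ^ 2 := this
          _ = (∑ j, (γ j)⁻¹) * (∑ i, γ i * μ i ^ 2 * x i ^ 2) := by
              congr 1
              · exact Finset.sum_congr rfl fun i _ =>
                  Real.sq_sqrt (le_of_lt (inv_pos.mpr (hγ i)))
              · refine Finset.sum_congr rfl fun i _ => ?_
                rw [mul_pow, mul_pow, Real.sq_sqrt (le_of_lt (hγ i))]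
                ring
      have hSx : 0 < x ⬝ᵥ S *ᵥ x := by simpa [star_trivial] using hS.dotProduct_mulVec_pos hx
      have h2 : (k / (∑ j, (γ j)⁻¹)) * (μ ⬝ᵥ x) ^ 2 ≤ k * (∑ i, γ i * μ i ^ 2 * x i ^ 2) := by
        have := mul_le_mul_of_nonneg_left hcs (le_of_lt (div_pos hkpos hsumpos))
        calc (k / (∑ j, (γ j)⁻¹)) * (μ ⬝ᵥ x) ^ 2
            ≤ (k / (∑ j, (γ j)⁻¹)) * ((∑ j, (γ j)⁻¹) * (∑ i, γ i * μ i ^ 2 * x i ^ 2)) := this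
          _ = k * (∑ i, γ i * μ i ^ 2 * x i ^ 2) := by
              have key : ∀ s A : ℝ, s ≠ 0 → (k / s) * (s * A) = k * A := by
                intro s A hs; field_simp
              exact key _ _ (ne_of_gt hsumpos)
      have h3 : 0 < (∑ j, (γ j)⁻¹)⁻¹ * (x ⬝ᵥ S *ᵥ x) :=
        mul_pos (inv_pos.mpr hsumpos) hSx
      linarith
  exact ⟨hMpd, isUnit_iff_ne_zero.mpr (ne_of_gt hMpd.det_pos)⟩
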